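/- The piecewise linear map τ₂ on [0,1] defined by τ₂(x) = 3x for 0 ≤ x < 1/6, τ₂(x) = (3/2)x + 1/4 for 1/6 ≤ x < 1/2, τ₂(x) = −(3/2)x + 7/4 for 1/2 ≤ x < 5/6, and τ₂(x) = −3x + 3 for 5/6 ≤ x ≤ 1 preserves the absolutely continuous measure with density f₂ = (2/3)·χ_{[0,1/2]} + (4/3)·χ_{[1/2,1]}. -/

import Mathlib

open MeasureTheory Set ENNReal

noncomputable section

/-- The upper piecewise linear map τ₂ of the motivating example. -/
def tau2 : ℝ → ℝ := fun x =>
  if x < 1/6 then 3 * x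
  else if x < 1/2 then (3/2) * x + 1/4
  else if x < 5/6 then -(3/2) * x + 7/4
  else -3 * x + 3

/-- The invariant density f₂ = (2/3)·χ_{[0,1/2]} + (4/3)·χ_{(1/2,1]}. -/
def dens2 : ℝ → ℝ≥0∞ := fun x => if x ≤ 1/2 then 2/3 else 4/3

lemma measurable_tau2 : Measurable tau2 := by
  unfold tau2
  refine Measurable.ite (measurableSet_Iio (a := (1/6:ℝ))) (by fun_prop) ?_
  refine Measurable.ite (measurableSet_Iio (a := (1/2:ℝ))) (by fun_prop) ?_
  exact Measurable.ite (measurableSet_Iio (a := (5/6:ℝ))) (by fun_prop) (by fun_prop)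

/-- measures agree when the difference is contained in a null set -/
lemma vol_eq_of_diff_null {S T F : Set ℝ} (hST : S ⊆ T) (h : T \ S ⊆ F)
    (hF : volume F = 0) : volume S = volume T := by
  refine le_antisymm (measure_mono hST) ?_
  calc volume T = volume (S ∪ (T \ S)) := by rw [Set.union_diff_cancel hST]
    _ ≤ volume S + volume (T \ S) := measure_union_le _ _
    _ ≤ volume S + volume F := add_le_add le_rfl (measure_mono h)
    _ = volume S := by rw [hF, add_zero]

/-- the affine change of variables for Lebesgue measure -/
lemma vol_affine (a b : ℝ) (ha : a ≠ 0) (s : Set ℝ) :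
    volume ((fun x => a * x + b) ⁻¹' s) = ENNReal.ofReal |a⁻¹| * volume s := by
  have h : (fun x : ℝ => a * x + b) ⁻¹' s = (a * ·) ⁻¹' ((fun x => x + b) ⁻¹' s) := rfl
  rw [h, Real.volume_preimage_mul_left ha, measure_preimage_add_right]

lemma vol_mul (a : ℝ) (ha : a ≠ 0) (s : Set ℝ) :
    volume ((fun x => a * x) ⁻¹' s) = ENNReal.ofReal |a⁻¹| * volume s :=
  Real.volume_preimage_mul_left ha s

/-- splitting the integral of dens2 into the two constant pieces -/
lemma dens2_split (S : Set ℝ) (hS : MeasurableSet S) :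
    ∫⁻ x in S, dens2 x
      = 2/3 * volume (S ∩ Iic (1/2)) + 4/3 * volume (S ∩ Ioi (1/2)) := by
  have hd : S = (S ∩ Iic (1/2:ℝ)) ∪ (S ∩ Ioi (1/2:ℝ)) := by
    rw [← Set.inter_union_distrib_left, Set.Iic_union_Ioi, Set.inter_univ]
  have hdisj : Disjoint (S ∩ Iic (1/2:ℝ)) (S ∩ Ioi (1/2:ℝ)) :=
    ((Set.Iic_disjoint_Ioi (le_refl (1/2:ℝ))).mono Set.inter_subset_right
      Set.inter_subset_right)
  nth_rewrite 1 [hd]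
  rw [lintegral_union (hS.inter measurableSet_Ioi) hdisj]
  have h1 : ∫⁻ x in S ∩ Iic (1/2:ℝ), dens2 x
      = ∫⁻ _ in S ∩ Iic (1/2:ℝ), (2/3 : ℝ≥0∞) := by
    refine setLIntegral_congr_fun (hS.inter measurableSet_Iic) ?_
    exact fun x hx => by simp only [dens2]; exact if_pos hx.2
  have h2 : ∫⁻ x in S ∩ Ioi (1/2:ℝ), dens2 x
      = ∫⁻ _ in S ∩ Ioi (1/2:ℝ), (4/3 : ℝ≥0∞) := by
    refine setLIntegral_congr_fun (hS.inter measurableSet_Ioi) ?_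
    refine fun x hx => ?_
    have h : ¬ x ≤ 1/2 := not_le.mpr hx.2
    simp only [dens2]; exact if_neg h
  rw [h1, h2, setLIntegral_const, setLIntegral_const, mul_comm, mul_comm (volume _)]

/-- τ₂ preserves the absolutely continuous measure with density f₂. -/
theorem stmt1 :
    ∀ A : Set ℝ, MeasurableSet A → A ⊆ Set.Icc (0:ℝ) 1 →
      ∫⁻ x in Set.Icc (0:ℝ) 1 ∩ tau2 ⁻¹' A, dens2 x = ∫⁻ x in A, dens2 x := by
  intro A hA hA1
  -- notation
  set S : Set ℝ := Set.Icc (0:ℝ) 1 ∩ tau2 ⁻¹' A with hSdef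
  have hS : MeasurableSet S := measurableSet_Icc.inter (hA.preimage measurable_tau2)
  set u := volume (A ∩ Iic (1/2:ℝ)) with hu
  set v := volume (A ∩ Ioi (1/2:ℝ)) with hv
  -- the four branch maps
  set g1 : ℝ → ℝ := fun x => 3 * x with hg1
  set g2 : ℝ → ℝ := fun x => (3/2) * x + 1/4 with hg2
  set g3 : ℝ → ℝ := fun x => -(3/2) * x + 7/4 with hg3
  set g4 : ℝ → ℝ := fun x => -3 * x + 3 with hg4
  have hg1m : MeasurableSet (g1 ⁻¹' A) := hA.preimage (by fun_prop)
  have hg2m : MeasurableSet (g2 ⁻¹' A) := hA.preimage (by fun_prop)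
  have hg3m : MeasurableSet (g3 ⁻¹' A) := hA.preimage (by fun_prop)
  have hg4m : MeasurableSet (g4 ⁻¹' A) := hA.preimage (by fun_prop)
  -- identity for the lower half
  have hid1 : S ∩ Iic (1/2:ℝ)
      = (Ico (0:ℝ) (1/6) ∩ g1 ⁻¹' A) ∪ (Icc (1/6:ℝ) (1/2) ∩ g2 ⁻¹' A) := by
    ext x
    simp only [hSdef, hg1, hg2, Set.mem_inter_iff, Set.mem_Iic, Set.mem_Icc, Set.mem_Ico,
      Set.mem_union, Set.mem_preimage]
    constructor
    · rintro ⟨⟨⟨h0, h1'⟩, hτ⟩, hhalf⟩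
      by_cases h1 : x < 1/6
      · left
        unfold tau2 at hτ; rw [if_pos h1] at hτ
        exact ⟨⟨h0, h1⟩, hτ⟩
      · right
        by_cases h2 : x < 1/2
        · unfold tau2 at hτ; rw [if_neg h1, if_pos h2] at hτ
          exact ⟨⟨le_of_not_gt h1, hhalf⟩, hτ⟩
        · have hx : x = 1/2 := le_antisymm hhalf (le_of_not_gt h2)
          unfold tau2 at hτ
          rw [if_neg h1, if_neg h2, if_pos (by rw [hx]; norm_num)] at hτ
          refine ⟨⟨le_of_not_gt h1, hhalf⟩, ?_⟩
          have he : (3/2) * x + 1/4 = -(3/2) * x + 7/4 := by rw [hx]; norm_num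
          rw [he]; exact hτ
    · rintro (⟨⟨h0, h1⟩, hτ⟩ | ⟨⟨h1, h2⟩, hτ⟩)
      · refine ⟨⟨⟨h0, by linarith⟩, ?_⟩, by linarith⟩
        unfold tau2; rw [if_pos h1]; exact hτ
      · refine ⟨⟨⟨by linarith, by linarith⟩, ?_⟩, h2⟩
        by_cases h2' : x < 1/2
        · unfold tau2; rw [if_neg (by linarith), if_pos h2']; exact hτ
        · have hx : x = 1/2 := le_antisymm h2 (le_of_not_gt h2')
          unfold tau2
          rw [if_neg (by linarith), if_neg h2', if_pos (by rw [hx]; norm_num)]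
          have he : -(3/2) * x + 7/4 = (3/2) * x + 1/4 := by rw [hx]; norm_num
          rw [he]; exact hτ
  -- identity for the upper half
  have hid2 : S ∩ Ioi (1/2:ℝ)
      = (Ioo (1/2:ℝ) (5/6) ∩ g3 ⁻¹' A) ∪ (Icc (5/6:ℝ) 1 ∩ g4 ⁻¹' A) := by
    ext x
    simp only [hSdef, hg3, hg4, Set.mem_inter_iff, Set.mem_Ioi, Set.mem_Icc, Set.mem_Ioo,
      Set.mem_union, Set.mem_preimage]
    constructor
    · rintro ⟨⟨⟨h0, h1'⟩, hτ⟩, hhalf⟩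
      by_cases h3 : x < 5/6
      · left
        unfold tau2 at hτ
        rw [if_neg (by linarith), if_neg (by linarith), if_pos h3] at hτ
        exact ⟨⟨hhalf, h3⟩, hτ⟩
      · right
        unfold tau2 at hτ
        rw [if_neg (by linarith), if_neg (by linarith), if_neg h3] at hτ
        exact ⟨⟨le_of_not_gt h3, h1'⟩, hτ⟩
    · rintro (⟨⟨h1, h2⟩, hτ⟩ | ⟨⟨h1, h2⟩, hτ⟩)
      · refine ⟨⟨⟨by linarith, by linarith⟩, ?_⟩, h1⟩
        unfold tau2
        rw [if_neg (by linarith), if_neg (by linarith), if_pos h2]; exact hτ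
      · refine ⟨⟨⟨by linarith, h2⟩, ?_⟩, by linarith⟩
        unfold tau2
        rw [if_neg (by linarith), if_neg (by linarith), if_neg (by linarith)]; exact hτ
  -- interval preimages
  have hpre1 : Ico (0:ℝ) (1/6) ∩ g1 ⁻¹' A = g1 ⁻¹' (Ico (0:ℝ) (1/2) ∩ A) := by
    rw [Set.preimage_inter]
    congr 1
    ext x
    simp only [hg1, Set.mem_Ico, Set.mem_preimage]
    constructor <;> rintro ⟨ha, hb⟩ <;> constructor <;> linarith
  have hpre2 : Icc (1/6:ℝ) (1/2) ∩ g2 ⁻¹' A = g2 ⁻¹' (Icc (1/2:ℝ) 1 ∩ A) := by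
    rw [Set.preimage_inter]
    congr 1
    ext x
    simp only [hg2, Set.mem_Icc, Set.mem_preimage]
    constructor <;> rintro ⟨ha, hb⟩ <;> constructor <;> linarith
  have hpre3 : Ioo (1/2:ℝ) (5/6) ∩ g3 ⁻¹' A = g3 ⁻¹' (Ioo (1/2:ℝ) 1 ∩ A) := by
    rw [Set.preimage_inter]
    congr 1
    ext x
    simp only [hg3, Set.mem_Ioo, Set.mem_preimage]
    constructor <;> rintro ⟨ha, hb⟩ <;> constructor <;> linarith
  have hpre4 : Icc (5/6:ℝ) 1 ∩ g4 ⁻¹' A = g4 ⁻¹' (Icc (0:ℝ) (1/2) ∩ A) := by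
    rw [Set.preimage_inter]
    congr 1
    ext x
    simp only [hg4, Set.mem_Icc, Set.mem_preimage]
    constructor <;> rintro ⟨ha, hb⟩ <;> constructor <;> linarith
  -- volumes of the image intersections
  have e1 : volume (Ico (0:ℝ) (1/2) ∩ A) = u := by
    refine vol_eq_of_diff_null (F := {(1/2:ℝ)}) ?_ ?_ Real.volume_singleton
    · rintro x ⟨⟨_, hb⟩, hxA⟩; exact ⟨hxA, le_of_lt hb⟩
    · rintro x ⟨⟨hxA, hle⟩, hnot⟩
      have h0 : (0:ℝ) ≤ x := (hA1 hxA).1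
      by_cases hlt : x < 1/2
      · exact absurd ⟨⟨h0, hlt⟩, hxA⟩ hnot
      · exact Set.mem_singleton_iff.mpr (le_antisymm hle (le_of_not_gt hlt))
  have e2 : volume (Icc (1/2:ℝ) 1 ∩ A) = v := by
    refine (vol_eq_of_diff_null (F := {(1/2:ℝ)}) ?_ ?_ Real.volume_singleton).symm
    · rintro x ⟨hxA, hgt⟩; exact ⟨⟨le_of_lt hgt, (hA1 hxA).2⟩, hxA⟩
    · rintro x ⟨⟨⟨hge, _⟩, hxA⟩, hnot⟩
      by_cases hgt : (1/2:ℝ) < x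
      · exact absurd ⟨hxA, hgt⟩ hnot
      · exact Set.mem_singleton_iff.mpr (le_antisymm (le_of_not_gt hgt) hge)
  have e3 : volume (Ioo (1/2:ℝ) 1 ∩ A) = v := by
    refine vol_eq_of_diff_null (F := {(1:ℝ)}) ?_ ?_ Real.volume_singleton
    · rintro x ⟨⟨ha, _⟩, hxA⟩; exact ⟨hxA, ha⟩
    · rintro x ⟨⟨hxA, hgt⟩, hnot⟩
      have h1 : x ≤ 1 := (hA1 hxA).2
      by_cases hlt : x < 1
      · exact absurd ⟨⟨hgt, hlt⟩, hxA⟩ hnot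
      · exact Set.mem_singleton_iff.mpr (le_antisymm h1 (le_of_not_gt hlt))
  have e4 : volume (Icc (0:ℝ) (1/2) ∩ A) = u := by
    congr 1
    ext x
    simp only [Set.mem_inter_iff, Set.mem_Icc, Set.mem_Iic]
    exact ⟨fun ⟨⟨_, hb⟩, hxA⟩ => ⟨hxA, hb⟩, fun ⟨hxA, hb⟩ => ⟨⟨(hA1 hxA).1, hb⟩, hxA⟩⟩
  -- volumes of the branch pieces
  have c3 : (ENNReal.ofReal |(3:ℝ)⁻¹|) = ENNReal.ofReal (1/3) := by norm_num
  have c32 : (ENNReal.ofReal |((3:ℝ)/2)⁻¹|) = ENNReal.ofReal (2/3) := by norm_num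
  have c3' : (ENNReal.ofReal |(-(3:ℝ)/2)⁻¹|) = ENNReal.ofReal (2/3) := by norm_num
  have c3'' : (ENNReal.ofReal |(-3:ℝ)⁻¹|) = ENNReal.ofReal (1/3) := by norm_num
  have m1 : volume (Ico (0:ℝ) (1/6) ∩ g1 ⁻¹' A) = ENNReal.ofReal (1/3) * u := by
    rw [hpre1, hg1, vol_mul 3 (by norm_num), e1, c3]
  have m2 : volume (Icc (1/6:ℝ) (1/2) ∩ g2 ⁻¹' A) = ENNReal.ofReal (2/3) * v := by
    rw [hpre2, hg2, vol_affine (3/2) (1/4) (by norm_num), e2, c32]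
  have m3 : volume (Ioo (1/2:ℝ) (5/6) ∩ g3 ⁻¹' A) = ENNReal.ofReal (2/3) * v := by
    rw [hpre3, hg3, vol_affine (-(3/2)) (7/4) (by norm_num), e3,
      show ENNReal.ofReal |(-(3/2):ℝ)⁻¹| = ENNReal.ofReal (2/3) by norm_num]
  have m4 : volume (Icc (5/6:ℝ) 1 ∩ g4 ⁻¹' A) = ENNReal.ofReal (1/3) * u := by
    rw [hpre4, hg4, vol_affine (-3) 3 (by norm_num), e4,
      show ENNReal.ofReal |(-3:ℝ)⁻¹| = ENNReal.ofReal (1/3) by norm_num]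
  -- volumes of the two halves
  have hdisj1 : Disjoint (Ico (0:ℝ) (1/6) ∩ g1 ⁻¹' A) (Icc (1/6:ℝ) (1/2) ∩ g2 ⁻¹' A) := by
    refine Set.disjoint_left.mpr ?_
    rintro x ⟨⟨_, hb⟩, _⟩ ⟨⟨ha, _⟩, _⟩
    linarith
  have hdisj2 : Disjoint (Ioo (1/2:ℝ) (5/6) ∩ g3 ⁻¹' A) (Icc (5/6:ℝ) 1 ∩ g4 ⁻¹' A) := by
    refine Set.disjoint_left.mpr ?_
    rintro x ⟨⟨_, hb⟩, _⟩ ⟨⟨ha, _⟩, _⟩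
    linarith
  have vol1 : volume (S ∩ Iic (1/2:ℝ))
      = ENNReal.ofReal (1/3) * u + ENNReal.ofReal (2/3) * v := by
    rw [hid1, measure_union hdisj1 (measurableSet_Icc.inter hg2m), m1, m2]
  have vol2 : volume (S ∩ Ioi (1/2:ℝ))
      = ENNReal.ofReal (2/3) * v + ENNReal.ofReal (1/3) * u := by
    rw [hid2, measure_union hdisj2 (measurableSet_Icc.inter hg4m), m3, m4]
  -- splitting both sides
  rw [dens2_split _ hS, dens2_split _ hA, vol1, vol2]
  -- final arithmetic in ℝ≥0∞
  have hA_Iic : A ∩ Iic (1/2:ℝ) = A ∩ Iic (1/2:ℝ) := rfl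
  have h23 : (2/3 : ℝ≥0∞) = ENNReal.ofReal (2/3) := by
    rw [ENNReal.ofReal_div_of_pos (by norm_num), ENNReal.ofReal_ofNat, ENNReal.ofReal_ofNat]
  have h43 : (4/3 : ℝ≥0∞) = ENNReal.ofReal (4/3) := by
    rw [ENNReal.ofReal_div_of_pos (by norm_num), ENNReal.ofReal_ofNat, ENNReal.ofReal_ofNat]
  rw [h23, h43]
  have expand : ∀ (a b c d u v : ℝ≥0∞),
      a * (b * u + c * v) + d * (c * v + b * u)
        = (a * b + d * b) * u + (a * c + d * c) * v := by
    intros; ring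
  rw [expand]
  congr 1
  · congr 1
    rw [← ENNReal.ofReal_mul (by norm_num), ← ENNReal.ofReal_mul (by norm_num),
      ← ENNReal.ofReal_add (by norm_num) (by norm_num)]
    norm_num
  · congr 1
    rw [← ENNReal.ofReal_mul (by norm_num), ← ENNReal.ofReal_mul (by norm_num),
      ← ENNReal.ofReal_add (by norm_num) (by norm_num)]
    norm_num

end
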